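/- Let V be a finite-dimensional vector space over ZMod 2, let B be a symmetric bilinear form on V with B(x,x) = 0 for all x, let q be a ℤ/2-quadratic enhancement of B, and let e_1,…,e_g,f_1,…,f_g be a symplectic basis for B. Then Σ_{x ∈ V} (-1)^{(q x).val} = (-1)^{(Σ_{i=1}^{g} q(e_i)·q(f_i)).val} · 2^g, where the sum Σ_i q(e_i)q(f_i) is taken in ZMod 2. In particular, the normalized Gauss sum equals (-1)^{Arf(q)} with Arf(q) := Σ_i q(e_i)q(f_i). -/

import Mathlib

private lemma chi_sum_zmod2 (f : ZMod 2 → ℂ) : ∑ x, f x = f 0 + f 1 := by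
  show ∑ x : Fin 2, f x = _
  exact Fin.sum_univ_two f

private lemma zmod2_cases (x : ZMod 2) : x = 0 ∨ x = 1 := by revert x; decide

private lemma val01 : ((0 : ZMod 2)).val = 0 ∧ ((1 : ZMod 2)).val = 1 ∧
    ((2 : ZMod 2)).val = 0 ∧ ((3 : ZMod 2)).val = 1 := by decide

private lemma chi_add (a c : ZMod 2) :
    ((-1 : ℂ) ^ (a + c).val) = (-1) ^ a.val * (-1) ^ c.val := by
  obtain ⟨v0, v1, v2, v3⟩ := val01
  rcases zmod2_cases a with rfl | rfl <;> rcases zmod2_cases c with rfl | rfl <;>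
    norm_num [v0, v1, v2, v3]

private lemma key_factor (α β : ZMod 2) :
    ∑ y : ZMod 2 × ZMod 2, ((-1 : ℂ) ^ (y.1 * α + y.2 * β + y.1 * y.2).val) =
      2 * (-1) ^ (α * β).val := by
  obtain ⟨v0, v1, v2, v3⟩ := val01
  rw [Fintype.sum_prod_type]
  rw [chi_sum_zmod2 (fun y1 => ∑ y2, _)]
  rcases zmod2_cases α with rfl | rfl <;> rcases zmod2_cases β with rfl | rfl <;>
    simp [chi_sum_zmod2] <;> norm_num [v0, v1, v2, v3]

private lemma chi_finsum {ι : Type*} (s : Finset ι) (f : ι → ZMod 2) :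
    ((-1 : ℂ) ^ (∑ i ∈ s, f i).val) = ∏ i ∈ s, (-1) ^ (f i).val := by
  classical
  induction s using Finset.induction with
  | empty => simp [val01.1]
  | insert _ _ hx ih =>
    rw [Finset.sum_insert hx, Finset.prod_insert hx, chi_add, ih]

set_option maxHeartbeats 1000000 in
/-- The Gauss sum of a `ℤ/2`-quadratic enhancement `q` of an alternating symmetric bilinear
form on a `ZMod 2`-vector space with symplectic basis `e₁,…,e_g,f₁,…,f_g` equals
`(-1)^{Arf(q)} · 2^g`, where `Arf(q) = Σᵢ q(eᵢ)·q(fᵢ)`. -/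
theorem arf_invariant_gauss_sum
    (V : Type*) [AddCommGroup V] [Module (ZMod 2) V] [FiniteDimensional (ZMod 2) V]
    [Fintype V]
    (B : LinearMap.BilinForm (ZMod 2) V)
    (hsymm : ∀ x y : V, B x y = B y x)
    (halt : ∀ x : V, B x x = 0)
    (q : V → ZMod 2)
    (hq : ∀ x y : V, q (x + y) = q x + q y + B x y)
    (g : ℕ) (b : Module.Basis (Fin g ⊕ Fin g) (ZMod 2) V)
    (hee : ∀ i j : Fin g, B (b (Sum.inl i)) (b (Sum.inl j)) = 0)
    (hff : ∀ i j : Fin g, B (b (Sum.inr i)) (b (Sum.inr j)) = 0)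
    (hef : ∀ i j : Fin g, B (b (Sum.inl i)) (b (Sum.inr j)) = if i = j then 1 else 0) :
    ∑ x : V, (-1 : ℂ) ^ (q x).val =
      (-1 : ℂ) ^ (∑ i : Fin g, q (b (Sum.inl i)) * q (b (Sum.inr i))).val * 2 ^ g := by
  classical
  have hq0 : q 0 = 0 := by
    have h := hq 0 0
    simp only [add_zero, map_zero, LinearMap.zero_apply] at h
    have h2 : q 0 + q 0 = 0 := by
      have : ∀ x : ZMod 2, x + x = 0 := by decide
      exact this _
    rw [h2] at h; exact h
  -- scalar rule
  have hqs : ∀ (a : ZMod 2) (x : V), q (a • x) = a * q x := by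
    intro a x
    rcases zmod2_cases a with rfl | rfl <;> simp [hq0]
  -- sum rule on pairwise orthogonal families
  have hqsum : ∀ (s : Finset (Fin g)) (v : Fin g → V),
      (∀ i ∈ s, ∀ j ∈ s, i ≠ j → B (v i) (v j) = 0) →
      q (∑ i ∈ s, v i) = ∑ i ∈ s, q (v i) := by
    intro s
    induction s using Finset.induction with
    | empty => intro v _; simp [hq0]
    | @insert a s ha ih =>
      intro v hv
      rw [Finset.sum_insert ha, Finset.sum_insert ha, hq,
        ih v (fun i hi j hj hij => hv i (Finset.mem_insert_of_mem hi)
          j (Finset.mem_insert_of_mem hj) hij)]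
      have : B (v a) (∑ i ∈ s, v i) = 0 := by
        rw [map_sum]
        refine Finset.sum_eq_zero fun j hj => ?_
        exact hv a (Finset.mem_insert_self a s) j (Finset.mem_insert_of_mem hj)
          (fun h => ha (h ▸ hj))
      rw [this, add_zero]
  -- the parametrization
  set e : Fin g → V := fun i => b (Sum.inl i) with he
  set f : Fin g → V := fun i => b (Sum.inr i) with hf
  set φ : (Fin g → ZMod 2 × ZMod 2) → V :=
    fun p => ∑ i : Fin g, ((p i).1 • e i + (p i).2 • f i) with hφ
  have hbij : Function.Bijective φ := by
    have hcomp : φ = b.equivFun.symm ∘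
        (fun p : Fin g → ZMod 2 × ZMod 2 => Sum.elim (fun i => (p i).1) (fun i => (p i).2)) := by
      funext p
      simp only [Function.comp_apply, Module.Basis.equivFun_symm_apply, hφ]
      rw [Fintype.sum_sum_type]
      rw [Finset.sum_add_distrib]
      rfl
    rw [hcomp]
    refine Function.Bijective.comp b.equivFun.symm.bijective ?_
    constructor
    · intro p p' h
      funext i
      have h1 := congrFun h (Sum.inl i)
      have h2 := congrFun h (Sum.inr i)
      simp only [Sum.elim_inl, Sum.elim_inr] at h1 h2
      exact Prod.ext h1 h2
    · intro c
      exact ⟨fun i => (c (Sum.inl i), c (Sum.inr i)), by funext j; cases j <;> rfl⟩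
  -- value of q on φ p
  have hqφ : ∀ p : Fin g → ZMod 2 × ZMod 2,
      q (φ p) = ∑ i : Fin g, ((p i).1 * q (e i) + (p i).2 * q (f i) + (p i).1 * (p i).2) := by
    intro p
    rw [hφ]
    rw [hqsum Finset.univ _ ?ortho]
    case ortho =>
      intro i _ j _ hij
      simp only [map_add, map_smul, LinearMap.add_apply, LinearMap.smul_apply, smul_eq_mul]
      rw [hee i j, hff i j, hef i j, hsymm (f i) (e j), hef j i,
        if_neg hij, if_neg (fun h => hij h.symm)]
      ring
    refine Finset.sum_congr rfl fun i _ => ?_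
    rw [hq, hqs, hqs]
    simp only [map_smul, LinearMap.smul_apply, smul_eq_mul]
    rw [hef i i, if_pos rfl]
    ring
  -- main computation
  rw [← Function.Bijective.sum_comp hbij (fun x => (-1 : ℂ) ^ (q x).val)]
  have hchi : ∀ p : Fin g → ZMod 2 × ZMod 2,
      ((-1 : ℂ) ^ (q (φ p)).val) =
        ∏ i : Fin g, (-1 : ℂ) ^ ((p i).1 * q (e i) + (p i).2 * q (f i) + (p i).1 * (p i).2).val := by
    intro p; rw [hqφ p, chi_finsum]
  simp only [Function.comp, hchi]
  rw [show (Finset.univ : Finset (Fin g → ZMod 2 × ZMod 2)) =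
      Fintype.piFinset (fun _ => (Finset.univ : Finset (ZMod 2 × ZMod 2))) from
      (Fintype.piFinset_univ).symm,
    ← Finset.prod_univ_sum (fun _ => (Finset.univ : Finset (ZMod 2 × ZMod 2)))
      (fun i y => (-1 : ℂ) ^ (y.1 * q (e i) + y.2 * q (f i) + y.1 * y.2).val)]
  have hkey : ∀ i : Fin g, ∑ y : ZMod 2 × ZMod 2,
      ((-1 : ℂ) ^ (y.1 * q (e i) + y.2 * q (f i) + y.1 * y.2).val)
      = 2 * (-1) ^ (q (e i) * q (f i)).val := fun i => key_factor _ _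
  rw [Finset.prod_congr rfl fun i _ => hkey i]
  rw [Finset.prod_mul_distrib, Finset.prod_const, ← chi_finsum]
  show (2:ℂ) ^ Finset.univ.card * (-1) ^ (∑ i : Fin g, q (e i) * q (f i)).val = _
  rw [Finset.card_univ, Fintype.card_fin, mul_comm]
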